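/- Let K ⊂ ℝ² be compact, let f : ℝ² → [−∞, ∞) be a function that is finite and continuous exactly on an open strip S = ℝ × I (I a bounded open interval), equals −∞ off S, and is bounded above on K ∩ S. Define F(x,y,z) = z − f(x,y) (with F = +∞ where f = −∞). Let C ⊂ ℝ³ be a closed set such that C ∩ (ℝ × Ī × ℝ) ⊆ K × ℝ and such that inf{z : (x,y,z) ∈ C, y ∈ I} > −∞. Then for every real λ, the set C ∩ {F ≤ λ} is compact; in particular, if inf_C F < ∞ then F attains its minimum on C. -/

import Mathlib

/-- Let `K ⊆ ℝ²` be compact and `S = ℝ × (c,d)` an open strip.  Let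
`f : ℝ² → [-∞, ∞)` be continuous (as an extended-real-valued function), finite exactly
on `S`, equal to `-∞` off `S`, and bounded above on `K ∩ S`.  Define
`F(x,y,z) = z - f(x,y)` (so `F = +∞` where `f = -∞`).  Let `C ⊆ ℝ³` be a closed set with
`C ∩ (ℝ × [c,d] × ℝ) ⊆ K × ℝ` and `inf {z : (x,y,z) ∈ C, y ∈ (c,d)} > -∞`.  Then for
every real `lam` the set `C ∩ {F ≤ lam}` is compact; in particular if `inf_C F < ∞`
then `F` attains its minimum on `C`. -/
theorem stmt16 (K : Set (ℝ × ℝ)) (hK : IsCompact K)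
    (c d : ℝ) (hcd : c < d)
    (f : ℝ × ℝ → EReal) (hfcont : Continuous f)
    (hftop : ∀ p : ℝ × ℝ, f p ≠ ⊤)
    (hfin : ∀ p : ℝ × ℝ, p.2 ∈ Set.Ioo c d → f p ≠ ⊥)
    (hout : ∀ p : ℝ × ℝ, p.2 ∉ Set.Ioo c d → f p = ⊥)
    (hbdd : ∃ Cb : ℝ, ∀ p ∈ K, p.2 ∈ Set.Ioo c d → f p ≤ ((Cb : ℝ) : EReal))
    (C : Set (ℝ × ℝ × ℝ)) (hCcl : IsClosed C)
    (hC1 : ∀ p ∈ C, p.2.1 ∈ Set.Icc c d → (p.1, p.2.1) ∈ K)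
    (hC2 : ∃ m : ℝ, ∀ p ∈ C, p.2.1 ∈ Set.Ioo c d → m ≤ p.2.2) :
    (∀ lam : ℝ,
      IsCompact {p ∈ C | ((p.2.2 : ℝ) : EReal) - f (p.1, p.2.1) ≤ ((lam : ℝ) : EReal)}) ∧
    ((∃ p ∈ C, ((p.2.2 : ℝ) : EReal) - f (p.1, p.2.1) ≠ ⊤) →
      ∃ q ∈ C, ∀ p ∈ C,
        ((q.2.2 : ℝ) : EReal) - f (q.1, q.2.1) ≤ ((p.2.2 : ℝ) : EReal) - f (p.1, p.2.1)) := by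
  obtain ⟨Cb, hCb⟩ := hbdd
  obtain ⟨m, hm⟩ := hC2
  set F : ℝ × ℝ × ℝ → EReal := fun p => ((p.2.2 : ℝ) : EReal) - f (p.1, p.2.1) with hF
  -- continuity of F
  have hFcont : Continuous F := by
    rw [continuous_iff_continuousAt]
    intro p
    have h1 : ContinuousAt (fun p : ℝ × ℝ × ℝ => ((p.2.2 : ℝ) : EReal)) p :=
      (continuous_coe_real_ereal.comp (continuous_snd.comp continuous_snd)).continuousAt
    have h2 : ContinuousAt (fun p : ℝ × ℝ × ℝ => - f (p.1, p.2.1)) p := by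
      exact (continuous_neg.comp (hfcont.comp (continuous_fst.prodMk
        (continuous_fst.comp continuous_snd)))).continuousAt
    have hadd : ContinuousAt (fun q : EReal × EReal => q.1 + q.2)
        (((p.2.2 : ℝ) : EReal), - f (p.1, p.2.1)) := by
      apply EReal.continuousAt_add
      · left; exact fun h => by simpa using h
      · left; exact fun h => by simpa using h
    have : ContinuousAt (fun p : ℝ × ℝ × ℝ =>
        ((p.2.2 : ℝ) : EReal) + (- f (p.1, p.2.1))) p :=
      ContinuousAt.comp (x := p)
        (f := fun p : ℝ × ℝ × ℝ => (((p.2.2 : ℝ) : EReal), - f (p.1, p.2.1)))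
        (g := fun q : EReal × EReal => q.1 + q.2) hadd (h1.prodMk h2)
    simpa [hF, sub_eq_add_neg] using this
  -- basic facts about F on sublevel sets
  have key : ∀ lam : ℝ, ∀ p ∈ C, F p ≤ ((lam : ℝ) : EReal) →
      (p.1, p.2.1) ∈ K ∧ m ≤ p.2.2 ∧ p.2.2 ≤ lam + Cb := by
    intro lam p hpC hple
    have hio : p.2.1 ∈ Set.Ioo c d := by
      by_contra h
      have hb := hout (p.1, p.2.1) h
      simp only [hF] at hple
      simp only [hb, EReal.coe_sub_bot] at hple
      exact absurd (top_le_iff.mp (le_trans le_top hple)) (by simp)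
    have hK' : (p.1, p.2.1) ∈ K := hC1 p hpC ⟨le_of_lt hio.1, le_of_lt hio.2⟩
    refine ⟨hK', hm p hpC hio, ?_⟩
    -- f value is real
    have hnb := hfin (p.1, p.2.1) hio
    have hnt := hftop (p.1, p.2.1)
    have hle : f (p.1, p.2.1) ≤ ((Cb : ℝ) : EReal) := hCb _ hK' hio
    simp only [hF] at hple
    obtain ⟨r, hr⟩ : ∃ r : ℝ, f (p.1, p.2.1) = (r : EReal) :=
      ⟨(f (p.1, p.2.1)).toReal, (EReal.coe_toReal hnt hnb).symm⟩
    rw [hr] at hle hple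
    rw [← EReal.coe_sub, EReal.coe_le_coe_iff] at hple
    have hrCb : r ≤ Cb := by exact_mod_cast hle
    linarith
  have compact_sub : ∀ lam : ℝ,
      IsCompact {p ∈ C | F p ≤ ((lam : ℝ) : EReal)} := by
    intro lam
    have hclosed : IsClosed {p ∈ C | F p ≤ ((lam : ℝ) : EReal)} := by
      have h2 : IsClosed {p : ℝ × ℝ × ℝ | F p ≤ ((lam : ℝ) : EReal)} :=
        isClosed_le hFcont continuous_const
      exact hCcl.inter h2
    have hbig : IsCompact ((fun q : (ℝ × ℝ) × ℝ => (q.1.1, q.1.2, q.2)) ''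
        (K ×ˢ Set.Icc m (lam + Cb))) :=
      (hK.prod isCompact_Icc).image
        ((continuous_fst.comp continuous_fst).prodMk
          ((continuous_snd.comp continuous_fst).prodMk continuous_snd))
    refine hbig.of_isClosed_subset hclosed ?_
    intro p hp
    obtain ⟨h1, h2, h3⟩ := key lam p hp.1 hp.2
    exact ⟨((p.1, p.2.1), p.2.2), ⟨h1, h2, h3⟩, rfl⟩
  refine ⟨compact_sub, ?_⟩
  rintro ⟨p₀, hp₀C, hp₀⟩
  -- F p₀ is not ⊥ either
  have hFnb : ∀ p : ℝ × ℝ × ℝ, F p ≠ ⊥ := by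
    intro p h
    have h' : ((p.2.2 : ℝ) : EReal) + -f (p.1, p.2.1) = ⊥ := by
      rw [← sub_eq_add_neg]; exact h
    rcases EReal.add_eq_bot_iff.mp h' with h'' | h''
    · simp at h''
    · exact hftop _ (EReal.neg_eq_bot_iff.mp h'')
  set lam := (F p₀).toReal with hlam
  have hp₀r : F p₀ = ((lam : ℝ) : EReal) := (EReal.coe_toReal hp₀ (hFnb p₀)).symm
  have hne : ({p ∈ C | F p ≤ ((lam : ℝ) : EReal)}).Nonempty :=
    ⟨p₀, hp₀C, le_of_eq hp₀r⟩
  obtain ⟨q, hq, hqmin⟩ := (compact_sub lam).exists_isMinOn hne hFcont.continuousOn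
  refine ⟨q, hq.1, fun p hpC => ?_⟩
  by_cases h : F p ≤ ((lam : ℝ) : EReal)
  · exact hqmin ⟨hpC, h⟩
  · exact le_trans (le_trans (hqmin ⟨hp₀C, le_of_eq hp₀r⟩) (le_of_eq hp₀r)) (le_of_not_ge h)
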